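/- Let F = (f_i)_{i ∈ ℕ} be a sequence of bounded functions ℕ → ℂ with AE(F) < +∞. Then for every ε > 0 there exists δ > 0 such that for every sequence G = (g_i)_{i ∈ ℕ} of bounded functions ℕ → ℂ with sup_{i ∈ ℕ} ‖g_i − f_i‖_∞ < δ, one has AE(G) > AE(F) − ε. -/

import Mathlib

open Filter Set Topology

namespace Anqie

variable {X : Type*} [TopologicalSpace X]

/-- `𝒰` is an open cover of `X`. -/
def IsOpenCover (𝒰 : Set (Set X)) : Prop :=
  (∀ U ∈ 𝒰, IsOpen U) ∧ ⋃₀ 𝒰 = Set.univ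

/-- The common refinement `𝒰 ∨ T⁻¹ 𝒰 ∨ ⋯ ∨ T^{-(n-1)} 𝒰`. -/
def iterJoin (T : X → X) (𝒰 : Set (Set X)) (n : ℕ) : Set (Set X) :=
  {V | ∃ u : Fin n → Set X, (∀ j, u j ∈ 𝒰) ∧ V = ⋂ j : Fin n, T^[(j : ℕ)] ⁻¹' u j}

/-- The minimal cardinality of a finite subcover of `𝒱` (junk value `0` if none exists). -/
noncomputable def coverNum (𝒱 : Set (Set X)) : ℕ :=
  sInf {k | ∃ F : Finset (Set X), (↑F : Set (Set X)) ⊆ 𝒱 ∧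
    ⋃₀ (↑F : Set (Set X)) = Set.univ ∧ F.card = k}

/-- The Adler–Konheim–McAndrew entropy of `T` relative to the open cover `𝒰`. -/
noncomputable def coverEntropy (T : X → X) (𝒰 : Set (Set X)) : EReal :=
  Filter.atTop.limsup fun n : ℕ =>
    ((Real.log (coverNum (iterJoin T 𝒰 n)) / n : ℝ) : EReal)

/-- The Adler–Konheim–McAndrew topological entropy of `T`, via open covers. -/
noncomputable def entropy (T : X → X) : EReal :=
  ⨆ 𝒰 ∈ {𝒰 : Set (Set X) | IsOpenCover 𝒰}, coverEntropy T 𝒰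

/-- The set of forward-orbit sequences of `f : ℕ → X` inside `X^ℕ`. -/
def orbitSet (f : ℕ → X) : Set (ℕ → X) :=
  {ω | ∃ n : ℕ, ∀ k : ℕ, ω k = f (n + k)}

/-- `X_f`, the closure of the set of orbit sequences in the product topology. -/
def orbitClosure (f : ℕ → X) : Set (ℕ → X) := closure (orbitSet f)

lemma shift_mem_orbitClosure (f : ℕ → X) {ω : ℕ → X} (hω : ω ∈ orbitClosure f) :
    (fun k => ω (k + 1)) ∈ orbitClosure f := by
  have hcont : Continuous fun ω : ℕ → X => fun k => ω (k + 1) :=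
    continuous_pi fun k => continuous_apply (k + 1)
  have hmaps : MapsTo (fun ω : ℕ → X => fun k => ω (k + 1)) (orbitSet f) (orbitSet f) := by
    rintro ω ⟨n, hn⟩
    refine ⟨n + 1, fun k => ?_⟩
    show ω (k + 1) = f (n + 1 + k)
    rw [hn (k + 1)]; congr 1; omega
  exact map_mem_closure hcont hω hmaps

/-- `B_f`, the left shift restricted to `X_f`. -/
def shiftOn (f : ℕ → X) : orbitClosure f → orbitClosure f :=
  fun ω => ⟨fun k => (ω : ℕ → X) (k + 1), shift_mem_orbitClosure f ω.2⟩

/-- The anqie entropy of a map `f : ℕ → X`: the AKM topological entropy of the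
left shift on `X_f`. -/
noncomputable def AE (f : ℕ → X) : EReal := entropy (shiftOn f)

end Anqie

namespace Anqie

/-- The sequence in `(ℂ^I)^ℕ` attached to a family `(f_i)_{i ∈ I}` of arithmetic
functions. -/
def famSeq {I : Type*} (f : I → ℕ → ℂ) : ℕ → (I → ℂ) := fun n i => f i n

/-- The anqie entropy of a family of arithmetic functions: the AKM entropy of the
left shift on the closure of `{((f_i(n+j))_i)_j : n ∈ ℕ}` in `(ℂ^I)^ℕ`. -/
noncomputable def AEfam {I : Type*} (f : I → ℕ → ℂ) : EReal := AE (famSeq f)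

end Anqie

namespace Anqie

variable {X : Type*} [TopologicalSpace X]

-- ## new lemmas

lemma shiftOn_iterate (f : ℕ → X) (x : orbitClosure f) (j k : ℕ) :
    ((shiftOn f)^[j] x : ℕ → X) k = (x : ℕ → X) (k + j) := by
  induction j generalizing k with
  | zero => rfl
  | succ j ih =>
    rw [Function.iterate_succ_apply']
    show ((shiftOn f)^[j] x : ℕ → X) (k + 1) = (x : ℕ → X) (k + (j + 1))
    rw [ih]
    have : k + 1 + j = k + (j + 1) := by omega
    rw [this]

lemma continuous_shiftOn (f : ℕ → X) : Continuous (shiftOn f) := by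
  refine Continuous.subtype_mk ?_ _
  exact continuous_pi fun k => (continuous_apply (k + 1)).comp continuous_subtype_val

lemma isOpenCover_iterJoin {T : X → X} (hT : Continuous T) {𝒰 : Set (Set X)}
    (h : IsOpenCover 𝒰) (n : ℕ) : IsOpenCover (iterJoin T 𝒰 n) := by
  constructor
  · rintro V ⟨u, hu, rfl⟩
    exact isOpen_iInter_of_finite fun j => ((h.1 _ (hu j)).preimage (hT.iterate _))
  · rw [Set.eq_univ_iff_forall]
    intro x
    have : ∀ j : Fin n, ∃ U ∈ 𝒰, T^[(j : ℕ)] x ∈ U := by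
      intro j
      have := h.2.symm ▸ Set.mem_univ (T^[(j : ℕ)] x)
      exact this
    choose u hu hx using this
    exact ⟨_, ⟨u, hu, rfl⟩, Set.mem_iInter.2 hx⟩

lemma exists_finite_subcover [CompactSpace X] {𝒱 : Set (Set X)} (h : IsOpenCover 𝒱) :
    ∃ Fs : Finset (Set X), (↑Fs : Set (Set X)) ⊆ 𝒱 ∧ ⋃₀ (↑Fs : Set (Set X)) = Set.univ := by
  classical
  have hcov : (Set.univ : Set X) ⊆ ⋃ V : 𝒱, (V : Set X) := by
    rw [← Set.sUnion_eq_iUnion, h.2]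
  obtain ⟨t, ht⟩ := isCompact_univ.elim_finite_subcover (fun V : 𝒱 => (V : Set X))
    (fun V => h.1 _ V.2) hcov
  refine ⟨t.image Subtype.val, ?_, ?_⟩
  · intro V hV
    simp only [Finset.coe_image, Set.mem_image, Finset.mem_coe] at hV
    obtain ⟨W, _, rfl⟩ := hV
    exact W.2
  · apply Set.eq_univ_of_univ_subset
    refine ht.trans ?_
    intro x hx
    simp only [Set.mem_iUnion] at hx
    obtain ⟨V, hVt, hxV⟩ := hx
    refine ⟨V, ?_, hxV⟩
    simp only [Finset.coe_image, Set.mem_image, Finset.mem_coe]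
    exact ⟨V, hVt, rfl⟩

lemma coverNum_spec [CompactSpace X] [Nonempty X] {𝒱 : Set (Set X)} (h : IsOpenCover 𝒱) :
    1 ≤ coverNum 𝒱 ∧ ∃ Fs : Finset (Set X), (↑Fs : Set (Set X)) ⊆ 𝒱 ∧
      ⋃₀ (↑Fs : Set (Set X)) = Set.univ ∧ Fs.card = coverNum 𝒱 := by
  set S := {k | ∃ Fs : Finset (Set X), (↑Fs : Set (Set X)) ⊆ 𝒱 ∧
    ⋃₀ (↑Fs : Set (Set X)) = Set.univ ∧ Fs.card = k} with hS
  have hne : S.Nonempty := by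
    obtain ⟨Fs, h1, h2⟩ := exists_finite_subcover h
    exact ⟨Fs.card, Fs, h1, h2, rfl⟩
  have hmem := Nat.sInf_mem hne
  obtain ⟨Fs, h1, h2, h3⟩ := hmem
  have hpos : 1 ≤ sInf S := by
    rcases Nat.eq_zero_or_pos (sInf S) with h0 | h0
    · exfalso
      rw [h0, Finset.card_eq_zero] at h3
      subst h3
      simp only [Finset.coe_empty, Set.sUnion_empty] at h2
      exact (Set.univ_nonempty.ne_empty h2.symm).elim
    · exact h0
  exact ⟨hpos, Fs, h1, h2, h3⟩

lemma nonempty_orbitClosure (f : ℕ → X) : Nonempty (orbitClosure f) :=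
  ⟨⟨fun k => f (0 + k), subset_closure ⟨0, fun _ => rfl⟩⟩⟩

lemma isCompact_orbitClosure_famSeq {g : ℕ → ℕ → ℂ} (hb : ∀ i, ∃ M : ℝ, ∀ n, ‖g i n‖ ≤ M) :
    IsCompact (orbitClosure (famSeq g)) := by
  choose M hM using hb
  have hK : IsCompact (Set.univ.pi fun _ : ℕ => Set.univ.pi fun i : ℕ =>
      Metric.closedBall (0 : ℂ) (M i)) :=
    isCompact_univ_pi fun _ => isCompact_univ_pi fun i => isCompact_closedBall _ _
  have hsub : orbitSet (famSeq g) ⊆ Set.univ.pi fun _ : ℕ => Set.univ.pi fun i : ℕ =>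
      Metric.closedBall (0 : ℂ) (M i) := by
    rintro ω ⟨n, hn⟩
    intro j _
    intro i _
    rw [hn j]
    simpa [famSeq, mem_closedBall_zero_iff] using hM i (n + j)
  exact hK.of_isClosed_subset isClosed_closure (closure_minimal hsub hK.isClosed)


lemma exists_window_subset {x : ℕ → ℕ → ℂ} {V : Set (ℕ → ℕ → ℂ)} (hV : V ∈ 𝓝 x) :
    ∃ m : ℕ, ∃ s : ℝ, 0 < s ∧
      {y : ℕ → ℕ → ℂ | ∀ j < m, ∀ i < m, dist (y j i) (x j i) < s} ⊆ V := by
  classical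
  rw [nhds_pi, Filter.mem_pi] at hV
  obtain ⟨I, hIfin, t, ht, hsub⟩ := hV
  have key : ∀ j : ℕ, ∃ Ij : Set ℕ, Ij.Finite ∧ ∃ u : ℕ → Set ℂ,
      (∀ i, u i ∈ 𝓝 (x j i)) ∧ Ij.pi u ⊆ t j := by
    intro j
    have := ht j
    rw [nhds_pi, Filter.mem_pi] at this
    obtain ⟨Ij, h1, u, h2, h3⟩ := this
    exact ⟨Ij, h1, u, h2, h3⟩
  choose Ij hIjfin u hu husub using key
  have key2 : ∀ j i : ℕ, ∃ ε : ℝ, 0 < ε ∧ Metric.ball (x j i) ε ⊆ u j i :=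
    fun j i => Metric.mem_nhds_iff.1 (hu j i)
  choose ε hε hball using key2
  set Ifin : Finset ℕ := hIfin.toFinset with hIfin'
  set B : Finset ℕ := Ifin ∪ Ifin.biUnion (fun j => (hIjfin j).toFinset) with hB
  refine ⟨B.sup id + 1, ((Ifin.biUnion fun j => ((hIjfin j).toFinset.image (ε j))) ∪ {1}).min'
    ⟨1, by simp⟩, ?_, ?_⟩
  · refine (Finset.lt_min'_iff _ _).2 ?_
    intro b hb
    simp only [Finset.mem_union, Finset.mem_biUnion, Finset.mem_image,
      Finset.mem_singleton, Set.Finite.mem_toFinset] at hb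
    rcases hb with ⟨j, hj, i, hi, rfl⟩ | rfl
    · exact hε j i
    · norm_num
  · intro y hy
    apply hsub
    intro j hj
    apply husub
    intro i hi
    apply hball
    rw [Metric.mem_ball]
    have hjm : j < B.sup id + 1 := by
      have : j ∈ B := by
        simp only [hB, Finset.mem_union, Set.Finite.mem_toFinset, hIfin']
        exact Or.inl hj
      exact Nat.lt_succ_of_le (Finset.le_sup (f := id) this)
    have him : i < B.sup id + 1 := by
      have : i ∈ B := by
        simp only [hB, Finset.mem_union, Finset.mem_biUnion, Set.Finite.mem_toFinset, hIfin']
        exact Or.inr ⟨j, hj, hi⟩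
      exact Nat.lt_succ_of_le (Finset.le_sup (f := id) this)
    refine lt_of_lt_of_le (hy j hjm i him) ?_
    apply Finset.min'_le
    simp only [Finset.mem_union, Finset.mem_biUnion, Finset.mem_image,
      Set.Finite.mem_toFinset, hIfin']
    exact Or.inl ⟨j, hj, i, hi, rfl⟩

lemma lebesgue {f : ℕ → ℕ → ℂ} (hcomp : IsCompact (orbitClosure f))
    {𝒰 : Set (Set (orbitClosure f))} (hU : IsOpenCover 𝒰) :
    ∃ m : ℕ, ∃ s : ℝ, 0 < s ∧ ∀ x : orbitClosure f, ∃ U ∈ 𝒰,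
      ∀ y : orbitClosure f,
        (∀ j < m, ∀ i < m, dist ((y : ℕ → ℕ → ℂ) j i) ((x : ℕ → ℕ → ℂ) j i) < s) → y ∈ U := by
  classical
  haveI : CompactSpace (orbitClosure f) := isCompact_iff_compactSpace.mp hcomp
  haveI : Nonempty (orbitClosure f) := nonempty_orbitClosure f
  have hx : ∀ x : orbitClosure f, ∃ U ∈ 𝒰, x ∈ U := by
    intro x
    have := hU.2.symm ▸ Set.mem_univ x
    exact this
  choose Uc hUcmem hUcx using hx
  have key : ∀ x : orbitClosure f, ∃ m : ℕ, ∃ s : ℝ, 0 < s ∧ ∀ y : orbitClosure f,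
      (∀ j < m, ∀ i < m, dist ((y : ℕ → ℕ → ℂ) j i) ((x : ℕ → ℕ → ℂ) j i) < s) → y ∈ Uc x := by
    intro x
    obtain ⟨V, hVopen, hVeq⟩ := isOpen_induced_iff.1 (hU.1 _ (hUcmem x))
    have hVnx : V ∈ 𝓝 (x : ℕ → ℕ → ℂ) := by
      apply hVopen.mem_nhds
      have : x ∈ Subtype.val ⁻¹' V := hVeq.symm ▸ hUcx x
      exact this
    obtain ⟨m, s, hs, hsub⟩ := exists_window_subset hVnx
    refine ⟨m, s, hs, fun y hy => ?_⟩
    have : (y : ℕ → ℕ → ℂ) ∈ V := hsub hy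
    rw [← hVeq]
    exact this
  choose mx sx hsx hballx using key
  set W : orbitClosure f → Set (orbitClosure f) := fun x =>
    {y | ∀ j < mx x, ∀ i < mx x, dist ((y : ℕ → ℕ → ℂ) j i) ((x : ℕ → ℕ → ℂ) j i) < sx x / 2}
    with hW
  have hWopen : ∀ x, IsOpen (W x) := by
    intro x
    have : W x = ⋂ j ∈ Finset.range (mx x), ⋂ i ∈ Finset.range (mx x),
        (fun y : orbitClosure f => (y : ℕ → ℕ → ℂ) j i) ⁻¹'
          Metric.ball ((x : ℕ → ℕ → ℂ) j i) (sx x / 2) := by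
      ext y
      simp [hW, Finset.mem_range, Metric.mem_ball]
    rw [this]
    refine isOpen_biInter_finset fun j _ => isOpen_biInter_finset fun i _ => ?_
    have hc : Continuous fun y : orbitClosure f => (y : ℕ → ℕ → ℂ) j i :=
      (continuous_apply i).comp ((continuous_apply j).comp continuous_subtype_val)
    exact Metric.isOpen_ball.preimage hc
  have hWcov : (Set.univ : Set (orbitClosure f)) ⊆ ⋃ x, W x := by
    intro x _
    exact Set.mem_iUnion.2 ⟨x, fun j _ i _ => by simp [hsx x]⟩
  obtain ⟨t, ht⟩ := isCompact_univ.elim_finite_subcover W hWopen hWcov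
  have htne : t.Nonempty := by
    obtain ⟨x₀⟩ := (inferInstance : Nonempty (orbitClosure f))
    have := ht (Set.mem_univ x₀)
    simp only [Set.mem_iUnion] at this
    obtain ⟨z, hz, _⟩ := this
    exact ⟨z, hz⟩
  refine ⟨t.sup mx, t.inf' htne (fun z => sx z / 2), ?_, ?_⟩
  · rw [Finset.lt_inf'_iff]
    intro z _
    linarith [hsx z]
  · intro x
    have := ht (Set.mem_univ x)
    simp only [Set.mem_iUnion] at this
    obtain ⟨z, hzt, hxz⟩ := this
    refine ⟨Uc z, hUcmem z, fun y hy => ?_⟩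
    apply hballx z
    intro j hj i hi
    have hjm : j < t.sup mx := lt_of_lt_of_le hj (Finset.le_sup hzt)
    have him : i < t.sup mx := lt_of_lt_of_le hi (Finset.le_sup hzt)
    have h1 := hy j hjm i him
    have h2 := hxz j hj i hi
    have h3 : t.inf' htne (fun z => sx z / 2) ≤ sx z / 2 := Finset.inf'_le _ hzt
    calc dist ((y : ℕ → ℕ → ℂ) j i) ((z : ℕ → ℕ → ℂ) j i)
        ≤ dist ((y : ℕ → ℕ → ℂ) j i) ((x : ℕ → ℕ → ℂ) j i)
          + dist ((x : ℕ → ℕ → ℂ) j i) ((z : ℕ → ℕ → ℂ) j i) := dist_triangle _ _ _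
      _ < sx z := by linarith


/-- The cover of `X_g` by width-`m`, radius-`r` balls at coordinate `0`. -/
def ballCover (g : ℕ → ℕ → ℂ) (m : ℕ) (r : ℝ) : Set (Set (orbitClosure (famSeq g))) :=
  Set.range fun x : orbitClosure (famSeq g) =>
    {y : orbitClosure (famSeq g) | ∀ i < m, dist ((y : ℕ → ℕ → ℂ) 0 i) ((x : ℕ → ℕ → ℂ) 0 i) < r}

lemma isOpenCover_ballCover (g : ℕ → ℕ → ℂ) (m : ℕ) {r : ℝ} (hr : 0 < r) :
    IsOpenCover (ballCover g m r) := by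
  constructor
  · rintro V ⟨x, rfl⟩
    show IsOpen {y : orbitClosure (famSeq g) |
      ∀ i < m, dist ((y : ℕ → ℕ → ℂ) 0 i) ((x : ℕ → ℕ → ℂ) 0 i) < r}
    have : {y : orbitClosure (famSeq g) |
        ∀ i < m, dist ((y : ℕ → ℕ → ℂ) 0 i) ((x : ℕ → ℕ → ℂ) 0 i) < r} =
        ⋂ i ∈ Finset.range m, (fun y : orbitClosure (famSeq g) => (y : ℕ → ℕ → ℂ) 0 i) ⁻¹'
          Metric.ball ((x : ℕ → ℕ → ℂ) 0 i) r := by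
      ext y
      simp [Finset.mem_range, Metric.mem_ball]
    rw [this]
    refine isOpen_biInter_finset fun i _ => ?_
    have hc : Continuous fun y : orbitClosure (famSeq g) => (y : ℕ → ℕ → ℂ) 0 i :=
      (continuous_apply i).comp ((continuous_apply 0).comp continuous_subtype_val)
    exact Metric.isOpen_ball.preimage hc
  · rw [Set.eq_univ_iff_forall]
    intro y
    exact ⟨_, ⟨y, rfl⟩, fun i _ => by simp [hr]⟩

/-- The orbit point of `famSeq g` starting at time `t`, as an element of `X_g`. -/
def orbPt (g : ℕ → ℕ → ℂ) (t : ℕ) : orbitClosure (famSeq g) :=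
  ⟨fun k => famSeq g (t + k), subset_closure ⟨t, fun _ => rfl⟩⟩

lemma coverNum_compare (F G : ℕ → ℕ → ℂ)
    (hFc : IsCompact (orbitClosure (famSeq F))) (hGc : IsCompact (orbitClosure (famSeq G)))
    {𝒰 : Set (Set (orbitClosure (famSeq F)))} (_hU : IsOpenCover 𝒰)
    (m : ℕ) (s : ℝ) (hs : 0 < s)
    (hleb : ∀ x : orbitClosure (famSeq F), ∃ U ∈ 𝒰, ∀ y : orbitClosure (famSeq F),
      (∀ j < m, ∀ i < m, dist ((y : ℕ → ℕ → ℂ) j i) ((x : ℕ → ℕ → ℂ) j i) < s) → y ∈ U)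
    (hδ : ∀ i k : ℕ, dist (G i k) (F i k) ≤ s / 16) (n : ℕ) :
    coverNum (iterJoin (shiftOn (famSeq F)) 𝒰 n) ≤
      coverNum (iterJoin (shiftOn (famSeq G)) (ballCover G m (s / 4)) (n + m)) := by
  classical
  haveI : CompactSpace (orbitClosure (famSeq F)) := isCompact_iff_compactSpace.mp hFc
  haveI : CompactSpace (orbitClosure (famSeq G)) := isCompact_iff_compactSpace.mp hGc
  haveI : Nonempty (orbitClosure (famSeq F)) := nonempty_orbitClosure _
  haveI : Nonempty (orbitClosure (famSeq G)) := nonempty_orbitClosure _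
  choose Ub hUbmem hUball using hleb
  have hWcov : IsOpenCover (ballCover G m (s / 4)) :=
    isOpenCover_ballCover G m (by linarith)
  have hWG : IsOpenCover (iterJoin (shiftOn (famSeq G)) (ballCover G m (s / 4)) (n + m)) :=
    isOpenCover_iterJoin (continuous_shiftOn _) hWcov (n + m)
  obtain ⟨-, C, hCsub, hCcov, hCcard⟩ := coverNum_spec hWG
  set τ : Set (orbitClosure (famSeq G)) → ℕ :=
    fun V => if h : ∃ t, orbPt G t ∈ V then h.choose else 0 with hτ
  set Φ : Set (orbitClosure (famSeq G)) → Set (orbitClosure (famSeq F)) := fun V =>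
    ⋂ j : Fin n, (shiftOn (famSeq F))^[(j : ℕ)] ⁻¹'
      Ub ((shiftOn (famSeq F))^[(j : ℕ)] (orbPt F (τ V))) with hΦ
  have hΦmem : ∀ V, Φ V ∈ iterJoin (shiftOn (famSeq F)) 𝒰 n := by
    intro V
    exact ⟨fun j => Ub ((shiftOn (famSeq F))^[(j : ℕ)] (orbPt F (τ V))),
      fun j => hUbmem _, rfl⟩
  have hcov : ⋃₀ (↑(C.image Φ) : Set (Set (orbitClosure (famSeq F)))) = Set.univ := by
    rw [Set.eq_univ_iff_forall]
    intro x
    -- find an orbit point close to x on the window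
    set O : Set (ℕ → ℕ → ℂ) :=
      {y | ∀ j < n + m, ∀ i < m, dist (y j i) ((x : ℕ → ℕ → ℂ) j i) < s / 8} with hO
    have hOopen : IsOpen O := by
      have : O = ⋂ j ∈ Finset.range (n + m), ⋂ i ∈ Finset.range m,
          (fun y : ℕ → ℕ → ℂ => y j i) ⁻¹' Metric.ball ((x : ℕ → ℕ → ℂ) j i) (s / 8) := by
        ext y
        simp [hO, Finset.mem_range, Metric.mem_ball]
      rw [this]
      refine isOpen_biInter_finset fun j _ => isOpen_biInter_finset fun i _ => ?_
      have hc : Continuous fun y : ℕ → ℕ → ℂ => y j i :=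
        (continuous_apply i).comp (continuous_apply j)
      exact Metric.isOpen_ball.preimage hc
    have hxO : (x : ℕ → ℕ → ℂ) ∈ O := fun j _ i _ => by
      simp only [dist_self]; positivity
    obtain ⟨p, hpO, hporbit⟩ := mem_closure_iff.1 x.2 O hOopen hxO
    obtain ⟨t, hpt⟩ := hporbit
    -- find the element of C containing the G-orbit point at time t
    have : orbPt G t ∈ ⋃₀ (↑C : Set (Set (orbitClosure (famSeq G)))) := by
      rw [hCcov]; exact Set.mem_univ _
    obtain ⟨V, hVC, hGtV⟩ := this
    have hex : ∃ t', orbPt G t' ∈ V := ⟨t, hGtV⟩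
    have ht₀ : orbPt G (τ V) ∈ V := by
      simp only [hτ, dif_pos hex]
      exact hex.choose_spec
    -- structure of V
    obtain ⟨u, hu, hVeq⟩ := hCsub hVC
    choose z hz using fun j => hu j
    -- any two G-points of V are (s/2)-close on the window
    have hVclose : ∀ q q' : orbitClosure (famSeq G), q ∈ V → q' ∈ V →
        ∀ J < n + m, ∀ i < m, dist ((q : ℕ → ℕ → ℂ) J i) ((q' : ℕ → ℕ → ℂ) J i) < s / 2 := by
      intro q q' hq hq' J hJ i hi
      rw [hVeq] at hq hq'
      have hq1 := Set.mem_iInter.1 hq ⟨J, hJ⟩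
      have hq2 := Set.mem_iInter.1 hq' ⟨J, hJ⟩
      rw [Set.mem_preimage, ← hz ⟨J, hJ⟩] at hq1 hq2
      have e1 := hq1 i hi
      have e2 := hq2 i hi
      rw [shiftOn_iterate] at e1 e2
      simp only [Nat.zero_add] at e1 e2
      calc dist ((q : ℕ → ℕ → ℂ) J i) ((q' : ℕ → ℕ → ℂ) J i)
          ≤ dist ((q : ℕ → ℕ → ℂ) J i) (((z ⟨J, hJ⟩ : orbitClosure (famSeq G)) : ℕ → ℕ → ℂ) 0 i)
            + dist (((z ⟨J, hJ⟩ : orbitClosure (famSeq G)) : ℕ → ℕ → ℂ) 0 i)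
              ((q' : ℕ → ℕ → ℂ) J i) := dist_triangle _ _ _
        _ < s / 2 := by rw [dist_comm (((z ⟨J, hJ⟩ : orbitClosure (famSeq G)) : ℕ → ℕ → ℂ) 0 i)] at *; linarith
    -- x belongs to Φ V
    have hxΦ : x ∈ Φ V := by
      simp only [hΦ]
      rw [Set.mem_iInter]
      intro j
      rw [Set.mem_preimage]
      apply hUball
      intro j' hj' i hi
      rw [shiftOn_iterate, shiftOn_iterate]
      set J := j' + (j : ℕ) with hJdef
      have hJ : J < n + m := by
        have := j.2
        omega
      have e1 : dist ((x : ℕ → ℕ → ℂ) J i) (p J i) < s / 8 := by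
        rw [dist_comm]; exact hpO J hJ i hi
      have e2 : dist (p J i) ((orbPt G t : ℕ → ℕ → ℂ) J i) ≤ s / 16 := by
        rw [hpt J]
        have : (orbPt G t : ℕ → ℕ → ℂ) J i = G i (t + J) := rfl
        rw [this]
        have : famSeq F (t + J) i = F i (t + J) := rfl
        rw [this, dist_comm]
        exact hδ i (t + J)
      have e3 : dist ((orbPt G t : ℕ → ℕ → ℂ) J i) ((orbPt G (τ V) : ℕ → ℕ → ℂ) J i) < s / 2 :=
        hVclose _ _ hGtV ht₀ J hJ i hi
      have e4 : dist ((orbPt G (τ V) : ℕ → ℕ → ℂ) J i) ((orbPt F (τ V) : ℕ → ℕ → ℂ) J i) ≤ s / 16 := by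
        have h1 : (orbPt G (τ V) : ℕ → ℕ → ℂ) J i = G i (τ V + J) := rfl
        have h2 : (orbPt F (τ V) : ℕ → ℕ → ℂ) J i = F i (τ V + J) := rfl
        rw [h1, h2]
        exact hδ i (τ V + J)
      have t1 := dist_triangle ((x : ℕ → ℕ → ℂ) J i) ((orbPt G (τ V) : ℕ → ℕ → ℂ) J i)
        ((orbPt F (τ V) : ℕ → ℕ → ℂ) J i)
      have t2 := dist_triangle ((x : ℕ → ℕ → ℂ) J i) ((orbPt G t : ℕ → ℕ → ℂ) J i)
        ((orbPt G (τ V) : ℕ → ℕ → ℂ) J i)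
      have t3 := dist_triangle ((x : ℕ → ℕ → ℂ) J i) (p J i) ((orbPt G t : ℕ → ℕ → ℂ) J i)
      linarith
    refine ⟨Φ V, ?_, hxΦ⟩
    simp only [Finset.coe_image, Set.mem_image, Finset.mem_coe]
    exact ⟨V, hVC, rfl⟩
  have h1 : coverNum (iterJoin (shiftOn (famSeq F)) 𝒰 n) ≤ (C.image Φ).card := by
    apply Nat.sInf_le
    refine ⟨C.image Φ, ?_, hcov, rfl⟩
    intro W hW
    simp only [Finset.coe_image, Set.mem_image, Finset.mem_coe] at hW
    obtain ⟨V, _, rfl⟩ := hW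
    exact hΦmem V
  calc coverNum (iterJoin (shiftOn (famSeq F)) 𝒰 n) ≤ (C.image Φ).card := h1
    _ ≤ C.card := Finset.card_image_le
    _ = _ := hCcard


lemma coverEntropy_univ_cover (T : X → X) [Nonempty X] :
    coverEntropy T {Set.univ} = 0 := by
  classical
  have hiter : ∀ n, iterJoin T {Set.univ} n = {Set.univ} := by
    intro n
    ext V
    constructor
    · rintro ⟨u, hu, rfl⟩
      have : ∀ j : Fin n, u j = Set.univ := fun j => hu j
      simp [this]
    · rintro rfl
      exact ⟨fun _ => Set.univ, fun _ => rfl, by simp⟩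
  have hnum : ∀ n, coverNum (iterJoin T {Set.univ} n) = 1 := by
    intro n
    rw [hiter]
    have h1 : (1 : ℕ) ∈ {k | ∃ Fs : Finset (Set X), (↑Fs : Set (Set X)) ⊆ {Set.univ} ∧
        ⋃₀ (↑Fs : Set (Set X)) = Set.univ ∧ Fs.card = k} := by
      refine ⟨{Set.univ}, by simp, by simp, by simp⟩
    have h0 : (0 : ℕ) ∉ {k | ∃ Fs : Finset (Set X), (↑Fs : Set (Set X)) ⊆ {Set.univ} ∧
        ⋃₀ (↑Fs : Set (Set X)) = Set.univ ∧ Fs.card = k} := by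
      rintro ⟨Fs, -, h2, h3⟩
      rw [Finset.card_eq_zero] at h3
      subst h3
      simp only [Finset.coe_empty, Set.sUnion_empty] at h2
      exact Set.univ_nonempty.ne_empty h2.symm
    have hle : coverNum {(Set.univ : Set X)} ≤ 1 := Nat.sInf_le h1
    interval_cases h : coverNum {(Set.univ : Set X)}
    · exact absurd (h ▸ Nat.sInf_mem ⟨1, h1⟩) h0
    · rfl
  unfold coverEntropy
  have : (fun n : ℕ => ((Real.log (coverNum (iterJoin T {Set.univ} n)) / n : ℝ) : EReal)) =
      fun _ : ℕ => (0 : EReal) := by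
    funext n
    rw [hnum n]
    simp
  rw [this, Filter.limsup_const]

lemma AE_nonneg (f : ℕ → X) : 0 ≤ AE f := by
  haveI : Nonempty (orbitClosure f) := nonempty_orbitClosure f
  have h : IsOpenCover {(Set.univ : Set (orbitClosure f))} := by
    constructor
    · rintro U rfl
      exact isOpen_univ
    · simp
  calc (0 : EReal) = coverEntropy (shiftOn f) {Set.univ} := (coverEntropy_univ_cover _).symm
    _ ≤ AE f := le_iSup₂ (f := fun 𝒰 (_ : 𝒰 ∈ {𝒰 : Set (Set (orbitClosure f)) | IsOpenCover 𝒰}) =>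
        coverEntropy (shiftOn f) 𝒰) {Set.univ} h

lemma limsup_shift_le (c : ℕ → ℝ) (hc : ∀ n, 0 ≤ c n) (m : ℕ) :
    (Filter.atTop.limsup fun n : ℕ => ((c (n + m) / n : ℝ) : EReal)) ≤
      Filter.atTop.limsup fun n : ℕ => ((c n / n : ℝ) : EReal) := by
  set L := Filter.atTop.limsup fun n : ℕ => ((c n / n : ℝ) : EReal) with hL
  by_cases hLtop : L = ⊤
  · rw [hLtop]; exact le_top
  have hL0 : (0 : EReal) ≤ L := by
    refine Filter.le_limsup_of_frequently_le ?_ (by isBoundedDefault)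
    apply Filter.Eventually.frequently
    filter_upwards with n
    have : (0 : ℝ) ≤ c n / n := div_nonneg (hc n) (Nat.cast_nonneg n)
    exact_mod_cast this
  have hLbot : L ≠ ⊥ := fun h => by simp [h] at hL0
  set Lr := L.toReal with hLr
  have hLeq : L = (Lr : EReal) := (EReal.coe_toReal hLtop hLbot).symm
  have key : ∀ η : ℝ, 0 < η →
      (Filter.atTop.limsup fun n : ℕ => ((c (n + m) / n : ℝ) : EReal)) ≤ ((Lr + η : ℝ) : EReal) := by
    intro η hη
    have hev : ∀ᶠ n in Filter.atTop, ((c n / n : ℝ) : EReal) < ((Lr + η : ℝ) : EReal) := by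
      refine Filter.eventually_lt_of_limsup_lt ?_ (by isBoundedDefault)
      rw [← hL, hLeq]
      exact EReal.coe_lt_coe_iff.2 (by linarith)
    obtain ⟨N, hN⟩ := Filter.eventually_atTop.1 hev
    have hub : ∀ᶠ n in Filter.atTop,
        ((c (n + m) / n : ℝ) : EReal) ≤ (((Lr + η) * (1 + (m : ℝ) / n) : ℝ) : EReal) := by
      filter_upwards [Filter.eventually_ge_atTop (max N 1)] with n hn
      have hn1 : 1 ≤ n := le_trans (le_max_right N 1) hn
      have hnN : N ≤ n := le_trans (le_max_left N 1) hn
      have hnm := hN (n + m) (by omega)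
      have hnm' : c (n + m) / (n + m : ℕ) < Lr + η := EReal.coe_lt_coe_iff.1 hnm
      have hnpos : (0 : ℝ) < n := by exact_mod_cast hn1
      have hnmpos : (0 : ℝ) < ((n : ℝ) + m) := by positivity
      have hcast : ((n + m : ℕ) : ℝ) = (n : ℝ) + m := by push_cast; ring
      rw [hcast] at hnm'
      have heq : c (n + m) / n = (c (n + m) / ((n : ℝ) + m)) * (((n : ℝ) + m) / n) := by
        field_simp
      have hfac : (0 : ℝ) ≤ ((n : ℝ) + m) / n := by positivity
      have h2 : c (n + m) / n ≤ (Lr + η) * (((n : ℝ) + m) / n) := by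
        rw [heq]
        exact mul_le_mul_of_nonneg_right (le_of_lt hnm') hfac
      have h3 : ((n : ℝ) + m) / n = 1 + (m : ℝ) / n := by
        field_simp
      rw [h3] at h2
      exact_mod_cast h2
    have hlim : Filter.Tendsto (fun n : ℕ => (((Lr + η) * (1 + (m : ℝ) / n) : ℝ) : EReal))
        Filter.atTop (nhds ((Lr + η : ℝ) : EReal)) := by
      rw [EReal.tendsto_coe]
      have : Filter.Tendsto (fun n : ℕ => (Lr + η) * (1 + (m : ℝ) / n)) Filter.atTop
          (nhds ((Lr + η) * (1 + 0))) :=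
        tendsto_const_nhds.mul (tendsto_const_nhds.add (tendsto_const_div_atTop_nhds_zero_nat (m : ℝ)))
      simpa using this
    calc (Filter.atTop.limsup fun n : ℕ => ((c (n + m) / n : ℝ) : EReal))
        ≤ Filter.atTop.limsup fun n : ℕ => (((Lr + η) * (1 + (m : ℝ) / n) : ℝ) : EReal) :=
          Filter.limsup_le_limsup hub
      _ = ((Lr + η : ℝ) : EReal) := hlim.limsup_eq
  by_contra hcon
  push_neg at hcon
  rw [hLeq] at hcon
  obtain ⟨r, hr1, hr2⟩ := EReal.exists_between_coe_real hcon
  have hrL : Lr < r := EReal.coe_lt_coe_iff.1 hr1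
  have := key (r - Lr) (by linarith)
  rw [show Lr + (r - Lr) = r by ring] at this
  exact absurd (lt_of_le_of_lt this hr2) (lt_irrefl _)

end Anqie

open Anqie

/-- Let `F = (f_i)_{i ∈ ℕ}` be a sequence of bounded functions
`ℕ → ℂ` with `AE(F) < +∞`. For every `ε > 0` there is `δ > 0` such that every
sequence `G = (g_i)` of bounded functions with `sup_i ‖g_i − f_i‖_∞ < δ` satisfies
`AE(G) > AE(F) − ε`. -/
theorem anqie_entropy_family_semicontinuous (F : ℕ → ℕ → ℂ)
    (hFb : ∀ i, ∃ M : ℝ, ∀ n, ‖F i n‖ ≤ M) (hFfin : Anqie.AEfam F < ⊤) :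
    ∀ ε : ℝ, 0 < ε → ∃ δ : ℝ, 0 < δ ∧ ∀ G : ℕ → ℕ → ℂ,
      (∀ i, ∃ M : ℝ, ∀ n, ‖G i n‖ ≤ M) →
      (⨆ i : ℕ, ⨆ n : ℕ, (‖G i n - F i n‖₊ : ENNReal)) < ENNReal.ofReal δ →
      Anqie.AEfam F - (ε : EReal) < Anqie.AEfam G := by
  classical
  intro ε hε
  have hFc := isCompact_orbitClosure_famSeq hFb
  haveI : CompactSpace (orbitClosure (famSeq F)) := isCompact_iff_compactSpace.mp hFc
  haveI : Nonempty (orbitClosure (famSeq F)) := nonempty_orbitClosure _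
  have h0 : (0 : EReal) ≤ AEfam F := AE_nonneg _
  have hbot : AEfam F ≠ ⊥ := fun h => by simp [h] at h0
  have htop : AEfam F ≠ ⊤ := ne_of_lt hFfin
  have hlt : AEfam F - (ε : EReal) < AEfam F := by
    rw [← EReal.coe_toReal htop hbot, ← EReal.coe_sub]
    exact EReal.coe_lt_coe_iff.2 (by linarith)
  -- extract a cover nearly achieving the entropy
  have hlt2 : AEfam F - (ε : EReal) <
      ⨆ 𝒰 ∈ {𝒰 : Set (Set (orbitClosure (famSeq F))) | IsOpenCover 𝒰},
        coverEntropy (shiftOn (famSeq F)) 𝒰 := hlt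
  rw [lt_iSup_iff] at hlt2
  obtain ⟨𝒰, h𝒰⟩ := hlt2
  rw [lt_iSup_iff] at h𝒰
  obtain ⟨h𝒰cover, hUlt⟩ := h𝒰
  -- Lebesgue number data
  obtain ⟨m, s, hs, hleb⟩ := lebesgue hFc h𝒰cover
  refine ⟨s / 16, by positivity, ?_⟩
  intro G hGb hGclose
  have hδ : ∀ i k : ℕ, dist (G i k) (F i k) ≤ s / 16 := by
    intro i k
    have h1 : (‖G i k - F i k‖₊ : ENNReal) < ENNReal.ofReal (s / 16) := by
      refine lt_of_le_of_lt ?_ hGclose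
      exact le_trans (le_iSup (fun n : ℕ => (‖G i n - F i n‖₊ : ENNReal)) k)
        (le_iSup (fun j : ℕ => ⨆ n : ℕ, (‖G j n - F j n‖₊ : ENNReal)) i)
    have h2 := (ENNReal.lt_ofReal_iff_toReal_lt ENNReal.coe_ne_top).1 h1
    rw [ENNReal.coe_toReal, coe_nnnorm] at h2
    rw [Complex.dist_eq]
    exact le_of_lt h2
  have hGc := isCompact_orbitClosure_famSeq hGb
  haveI : CompactSpace (orbitClosure (famSeq G)) := isCompact_iff_compactSpace.mp hGc
  haveI : Nonempty (orbitClosure (famSeq G)) := nonempty_orbitClosure _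
  set 𝒲 := ballCover G m (s / 4) with h𝒲def
  have h𝒲 : IsOpenCover 𝒲 := isOpenCover_ballCover _ _ (by positivity)
  have hcmp := coverNum_compare F G hFc hGc h𝒰cover m s hs hleb hδ
  set c : ℕ → ℝ := fun n => Real.log (coverNum (iterJoin (shiftOn (famSeq G)) 𝒲 n)) with hc
  have hc0 : ∀ n, 0 ≤ c n := by
    intro n
    apply Real.log_nonneg
    exact_mod_cast (coverNum_spec (isOpenCover_iterJoin (continuous_shiftOn _) h𝒲 n)).1
  have step1 : coverEntropy (shiftOn (famSeq F)) 𝒰 ≤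
      Filter.atTop.limsup fun n : ℕ => ((c (n + m) / n : ℝ) : EReal) := by
    refine Filter.limsup_le_limsup ?_ (by isBoundedDefault) (by isBoundedDefault)
    filter_upwards with n
    have hF1 : 1 ≤ coverNum (iterJoin (shiftOn (famSeq F)) 𝒰 n) :=
      (coverNum_spec (isOpenCover_iterJoin (continuous_shiftOn _) h𝒰cover n)).1
    have hlog : Real.log (coverNum (iterJoin (shiftOn (famSeq F)) 𝒰 n)) ≤ c (n + m) := by
      apply Real.log_le_log
      · exact_mod_cast Nat.lt_of_lt_of_le Nat.zero_lt_one hF1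
      · exact_mod_cast hcmp n
    have hdiv : Real.log (coverNum (iterJoin (shiftOn (famSeq F)) 𝒰 n)) / n ≤ c (n + m) / n := by
      rcases Nat.eq_zero_or_pos n with rfl | hn
      · simp
      · have : (0 : ℝ) < n := by exact_mod_cast hn
        exact (div_le_div_iff_of_pos_right this).2 hlog
    exact_mod_cast hdiv
  have step2 := limsup_shift_le c hc0 m
  have step3 : (Filter.atTop.limsup fun n : ℕ => ((c n / n : ℝ) : EReal)) =
      coverEntropy (shiftOn (famSeq G)) 𝒲 := rfl
  have step4 : coverEntropy (shiftOn (famSeq G)) 𝒲 ≤ AEfam G :=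
    le_iSup₂ (f := fun 𝒱 (_ : 𝒱 ∈ {𝒱 : Set (Set (orbitClosure (famSeq G))) | IsOpenCover 𝒱}) =>
      coverEntropy (shiftOn (famSeq G)) 𝒱) 𝒲 h𝒲
  calc AEfam F - (ε : EReal) < coverEntropy (shiftOn (famSeq F)) 𝒰 := hUlt
    _ ≤ Filter.atTop.limsup fun n : ℕ => ((c (n + m) / n : ℝ) : EReal) := step1
    _ ≤ Filter.atTop.limsup fun n : ℕ => ((c n / n : ℝ) : EReal) := step2
    _ = coverEntropy (shiftOn (famSeq G)) 𝒲 := step3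
    _ ≤ AEfam G := step4
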